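/- Assume r/2 < t ≤ t′, σ − n/2 > t′ − r/2, 2d̃ + r > 0 and a > 0, and assume the function D is symmetric, i.e. D(λ,λ′) = D(λ′,λ) for all index pairs. Then for every J ∈ ℕ and every pair of indices (λ,λ′) = ((j,k),(j′,k′)) with j > j′: if (λ,λ′) ∈ supp_D(J,t,t′), then (λ′,λ) ∈ supp_D(J,t,t′). -/
import Mathlib


/-- The compression threshold
`τ_{jj'} = a · max{2^{−min(j,j')}, 2^{(J(t+t'−r) − jt' − j't − (j+j')d̃)/(2d̃+r)}}`. -/
noncomputable def tauThresh (r t t' dtil a : ℝ) (J j j' : ℕ) : ℝ :=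
  a * max ((2 : ℝ) ^ (-((min j j' : ℕ) : ℝ)))
      ((2 : ℝ) ^ (((J : ℝ) * (t + t' - r) - (j : ℝ) * t' - (j' : ℝ) * t
        - ((j : ℝ) + (j' : ℝ)) * dtil) / (2 * dtil + r)))

/-- The compression support `supp_D(J,t,t')`: pairs of indices `((j,k),(j',k'))`
with scales at most `J`, distance `D` at most the threshold `τ_{jj'}`, and
satisfying the two slope conditions. -/
noncomputable def suppD {K : Type*} (n r σ dtil a : ℝ) (D : ℕ × K → ℕ × K → ℝ)
    (J : ℕ) (t t' : ℝ) : Set ((ℕ × K) × (ℕ × K)) :=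
  {p | p.1.1 ≤ J ∧ p.2.1 ≤ J ∧
    D p.1 p.2 ≤ tauThresh r t t' dtil a J p.1.1 p.2.1 ∧
    (p.1.1 : ℝ) ≤ ((t + t' - r) * J + (σ - n / 2 - (t - r / 2)) * p.2.1)
        / (σ - n / 2 + t' - r / 2) ∧
    (p.2.1 : ℝ) ≤ ((t + t' - r) * J + (σ - n / 2 - (t' - r / 2)) * p.1.1)
        / (σ - n / 2 + t - r / 2)}

/-- If `D` is symmetric, `r/2 < t ≤ t'`, `σ − n/2 > t' − r/2`, `2d̃ + r > 0` and
`a > 0`, then membership of `((j,k),(j',k'))` with `j > j'` in the compression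
support `supp_D(J,t,t')` implies membership of the transposed pair `((j',k'),(j,k))`. -/
theorem supp_symmetric_transfer {K : Type*}
    (n r σ t t' dtil a : ℝ)
    (h1 : r / 2 < t) (h2 : t ≤ t') (h3 : σ - n / 2 > t' - r / 2)
    (h4 : 0 < 2 * dtil + r) (ha : 0 < a)
    (D : ℕ × K → ℕ × K → ℝ) (hD : ∀ p q, D p q = D q p)
    (J : ℕ) (j j' : ℕ) (k k' : K) (hjj : j' < j)
    (hmem : ((j, k), (j', k')) ∈ suppD n r σ dtil a D J t t') :
    ((j', k'), (j, k)) ∈ suppD n r σ dtil a D J t t' := by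
  obtain ⟨hj, hj', hd, hA, hB⟩ := hmem
  have hjr : (j' : ℝ) ≤ (j : ℝ) := by exact_mod_cast hjj.le
  have hden1 : 0 < σ - n / 2 + t' - r / 2 := by linarith
  have hden2 : 0 < σ - n / 2 + t - r / 2 := by linarith
  have hA' : (j : ℝ) * (σ - n / 2 + t' - r / 2)
      ≤ (t + t' - r) * J + (σ - n / 2 - (t - r / 2)) * j' :=
    (le_div_iff₀ hden1).mp hA
  have hB' : (j' : ℝ) * (σ - n / 2 + t - r / 2)
      ≤ (t + t' - r) * J + (σ - n / 2 - (t' - r / 2)) * j :=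
    (le_div_iff₀ hden2).mp hB
  refine ⟨hj', hj, ?_, ?_, ?_⟩
  · rw [hD]
    refine hd.trans ?_
    unfold tauThresh
    refine mul_le_mul_of_nonneg_left (max_le_max ?_ ?_) ha.le
    · rw [min_comm]
    · apply Real.rpow_le_rpow_of_exponent_le one_le_two
      rw [div_le_div_iff_of_pos_right h4]
      nlinarith [mul_nonneg (sub_nonneg.mpr hjr) (sub_nonneg.mpr h2)]
  · rw [le_div_iff₀ hden1]
    nlinarith [mul_nonneg (sub_nonneg.mpr hjr) (sub_nonneg.mpr h2)]
  · rw [le_div_iff₀ hden2]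
    nlinarith [mul_nonneg (sub_nonneg.mpr hjr) (sub_nonneg.mpr h2)]
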